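/- Let F be holomorphic on a half-plane {Re(s) > σ₀} ⊂ ℂ and suppose there are holomorphic functions G_j on {Re(s) > σ₀ − δ} (for some δ > 0), a nonzero polynomial (or entire function) P, and a shift μ > 0 such that F(s) = (Σ_j G_j(s + μ))/P(s) whenever Re(s) > σ₀ and P(s) ≠ 0. If this functional recursion holds at every stage (with the G_j themselves expressible in terms of further shifts), then F extends to a meromorphic function on ℂ with poles only at points s where some iterated denominator P(s + kμ') vanishes. -/

import Mathlib

open scoped BigOperators

open Filter Topology

/-- Sums of functions meromorphic at a point are meromorphic there. -/
private lemma meromorphicAt_finset_sum {ι : Type*} (t : Finset ι) (h : ι → ℂ → ℂ) (x : ℂ)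
    (H : ∀ j ∈ t, MeromorphicAt (h j) x) :
    MeromorphicAt (fun s => ∑ j ∈ t, h j s) x := by
  classical
  induction t using Finset.induction with
  | empty => simpa using MeromorphicAt.const (0 : ℂ) x
  | insert _ _ hj ih =>
      simp only [Finset.sum_insert hj]
      exact (H _ (Finset.mem_insert_self _ _)).add
        (ih fun j hjt => H j (Finset.mem_insert_of_mem hjt))

/-- Meromorphy is preserved by translation of the variable. -/
private lemma meromorphicAt_shift (h : ℂ → ℂ) (μ : ℂ) (x : ℂ)
    (H : MeromorphicAt h (x + μ)) :
    MeromorphicAt (fun z => h (z + μ)) x := by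
  obtain ⟨n, hn⟩ := H
  refine ⟨n, ?_⟩
  have htr : AnalyticAt ℂ (fun z : ℂ => z + μ) x :=
    ((differentiable_id.add_const μ).analyticAt x)
  have hcomp : AnalyticAt ℂ
      ((fun w => (w - (x + μ)) ^ n • h w) ∘ (fun z : ℂ => z + μ)) x := hn.comp_of_eq htr rfl
  refine hcomp.congr (Eventually.of_forall fun z => ?_)
  simp only [Function.comp]
  congr 2
  ring

/-- Abstract meromorphic-continuation-by-recursion (shape of Theorem 2.7).
Let `𝒜` be a family of functions, each holomorphic on the half-plane
`{Re s > σ₀}`, containing `F`, let `P` be a nonzero entire function, and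
`μ > 0` a shift, such that every `f ∈ 𝒜` satisfies the functional recursion
`f(s) = (Σ_j g_j(s + μ))/P(s)` with the `g_j` again in `𝒜`.  Then `F`
extends to a meromorphic function on `ℂ`, analytic away from the points `s`
where some iterated denominator `P(s + kμ)` vanishes. -/
theorem meromorphic_continuation_by_recursion
    (σ₀ : ℝ) (μ : ℝ) (hμ : 0 < μ)
    (P : ℂ → ℂ) (hP : Differentiable ℂ P) (hPne : ∃ s, P s ≠ 0)
    (𝒜 : Set (ℂ → ℂ)) (F : ℂ → ℂ) (hF : F ∈ 𝒜)
    (hhol : ∀ f ∈ 𝒜, DifferentiableOn ℂ f {s : ℂ | σ₀ < s.re})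
    (hrec : ∀ f ∈ 𝒜, ∃ (n : ℕ) (g : Fin n → (ℂ → ℂ)),
      (∀ j, g j ∈ 𝒜) ∧
      ∀ s : ℂ, σ₀ < s.re → P s ≠ 0 →
        f s = (∑ j, g j (s + (μ : ℂ))) / P s) :
    ∃ Ft : ℂ → ℂ,
      MeromorphicOn Ft Set.univ ∧
      (∀ s : ℂ, σ₀ < s.re → (∀ k : ℕ, P (s + (k : ℂ) * (μ : ℂ)) ≠ 0) → Ft s = F s) ∧
      (∀ s : ℂ, (∀ k : ℕ, P (s + (k : ℂ) * (μ : ℂ)) ≠ 0) → AnalyticAt ℂ Ft s) := by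
  classical
  -- choose the recursion data
  choose n g hmem heq using fun f : {f : ℂ → ℂ // f ∈ 𝒜} => hrec f.1 f.2
  -- the iterated extensions
  obtain ⟨E, hE0, hES⟩ :
      ∃ E : ℕ → {f : ℂ → ℂ // f ∈ 𝒜} → ℂ → ℂ,
        (∀ f s, E 0 f s = f.1 s) ∧
        (∀ m f s, E (m + 1) f s
            = (∑ j, E m ⟨g f j, hmem f j⟩ (s + (μ : ℂ))) / P s) :=
    ⟨fun m => Nat.rec (fun f s => f.1 s)
        (fun m Em f s => (∑ j, Em ⟨g f j, hmem f j⟩ (s + (μ : ℂ))) / P s) m,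
      fun _ _ => rfl, fun _ _ _ => rfl⟩
  -- openness of the half-planes
  have hopen : ∀ c : ℝ, IsOpen {s : ℂ | c < s.re} := fun c =>
    isOpen_lt continuous_const Complex.continuous_re
  -- zeros of the (shifted) denominator are isolated
  have hPnz : ∀ (x : ℂ) (k : ℕ), ∀ᶠ z in 𝓝[≠] x, P (z + (k : ℂ) * μ) ≠ 0 := by
    intro x k
    have han : AnalyticAt ℂ (fun z : ℂ => P (z + (k : ℂ) * μ)) x :=
      (hP.analyticAt _).comp ((differentiable_id.add_const _).analyticAt x)
    rcases han.eventually_eq_zero_or_eventually_ne_zero with h0 | h1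
    · exfalso
      have hQ : AnalyticOnNhd ℂ (fun z : ℂ => P (z + (k : ℂ) * μ)) Set.univ := fun z _ =>
        (hP.analyticAt _).comp ((differentiable_id.add_const _).analyticAt z)
      have hzero : Set.EqOn (fun z : ℂ => P (z + (k : ℂ) * μ)) 0 Set.univ :=
        hQ.eqOn_zero_of_preconnected_of_eventuallyEq_zero isPreconnected_univ
          (Set.mem_univ x) h0
      obtain ⟨s₁, hs₁⟩ := hPne
      have := hzero (Set.mem_univ (s₁ - (k : ℂ) * μ))
      simp only [Pi.zero_apply, sub_add_cancel] at this
      exact hs₁ this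
    · exact h1
  -- finitely many nonvanishing conditions at once
  have hPgood : ∀ (x : ℂ) (m : ℕ),
      ∀ᶠ z in 𝓝[≠] x, ∀ k ≤ m, P (z + (k : ℂ) * μ) ≠ 0 := by
    intro x m
    have hall : ∀ k ∈ Set.Iic m, ∀ᶠ z in 𝓝[≠] x, P (z + (k : ℂ) * μ) ≠ 0 :=
      fun k _ => hPnz x k
    have := (Filter.eventually_all_finite (Set.finite_Iic m)).2 hall
    exact this.mono fun z hz k hk => hz k hk
  -- stabilization of one recursion step
  have hstab : ∀ (m : ℕ) (f : {f : ℂ → ℂ // f ∈ 𝒜}) (s : ℂ), σ₀ - (m : ℝ) * μ < s.re →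
      (∀ k ≤ m, P (s + (k : ℂ) * μ) ≠ 0) → E (m + 1) f s = E m f s := by
    intro m
    induction m with
    | zero =>
      intro f s hs hk
      have h0 : P s ≠ 0 := by simpa using hk 0 le_rfl
      have hs' : σ₀ < s.re := by simpa using hs
      rw [hES, hE0]
      have hval := heq f s hs' h0
      rw [hval]
      congr 1
      exact Finset.sum_congr rfl fun j _ => hE0 _ _
    | succ m ih =>
      intro f s hs hk
      rw [hES, hES]
      congr 1
      refine Finset.sum_congr rfl fun j _ => ?_
      apply ih
      · have hre : (s + (μ : ℂ)).re = s.re + μ := by simp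
        push_cast at hs
        rw [hre]
        linarith
      · intro k hk'
        have e : s + (μ : ℂ) + (k : ℂ) * μ = s + ((k + 1 : ℕ) : ℂ) * μ := by
          push_cast; ring
        rw [e]
        exact hk (k + 1) (by omega)
  -- chaining the stabilization
  have hchain0 : ∀ (d m₀ : ℕ) (f : {f : ℂ → ℂ // f ∈ 𝒜}) (s : ℂ),
      σ₀ - (m₀ : ℝ) * μ < s.re → (∀ k ≤ m₀ + d, P (s + (k : ℂ) * μ) ≠ 0) →
      E (m₀ + d) f s = E m₀ f s := by
    intro d
    induction d with
    | zero => intro m₀ f s _ _; rfl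
    | succ d ih =>
      intro m₀ f s hs hk
      have h1 : E (m₀ + d + 1) f s = E (m₀ + d) f s := by
        apply hstab
        · have : (m₀ : ℝ) * μ ≤ ((m₀ + d : ℕ) : ℝ) * μ := by
            push_cast
            nlinarith [hμ.le]
          linarith
        · intro k hk'; exact hk k (by omega)
      calc E (m₀ + (d + 1)) f s = E (m₀ + d + 1) f s := by ring_nf
        _ = E (m₀ + d) f s := h1
        _ = E m₀ f s := ih m₀ f s hs (fun k hk' => hk k (by omega))
  have hchain : ∀ (m₀ m : ℕ), m₀ ≤ m → ∀ (f : {f : ℂ → ℂ // f ∈ 𝒜}) (s : ℂ),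
      σ₀ - (m₀ : ℝ) * μ < s.re → (∀ k ≤ m, P (s + (k : ℂ) * μ) ≠ 0) →
      E m f s = E m₀ f s := by
    intro m₀ m hle f s hs hk
    have := hchain0 (m - m₀) m₀ f s hs (fun k hk' => hk k (by omega))
    rwa [Nat.add_sub_cancel' hle] at this
  -- analyticity at good points
  have han : ∀ (m : ℕ) (f : {f : ℂ → ℂ // f ∈ 𝒜}) (s : ℂ), σ₀ - (m : ℝ) * μ < s.re →
      (∀ k ≤ m, P (s + (k : ℂ) * μ) ≠ 0) → AnalyticAt ℂ (E m f) s := by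
    intro m
    induction m with
    | zero =>
      intro f s hs _
      have hs' : σ₀ < s.re := by simpa using hs
      have h1 : AnalyticAt ℂ f.1 s :=
        (hhol f.1 f.2).analyticAt ((hopen σ₀).mem_nhds hs')
      exact h1.congr (Eventually.of_forall fun z => (hE0 f z).symm)
    | succ m ih =>
      intro f s hs hk
      have hP0 : P s ≠ 0 := by simpa using hk 0 (Nat.zero_le _)
      have hsum : AnalyticAt ℂ
          (fun z => ∑ j, E m ⟨g f j, hmem f j⟩ (z + (μ : ℂ))) s := by
        apply Finset.analyticAt_fun_sum
        intro j _
        have hj : AnalyticAt ℂ (E m ⟨g f j, hmem f j⟩) (s + (μ : ℂ)) := by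
          apply ih
          · have hre : (s + (μ : ℂ)).re = s.re + μ := by simp
            push_cast at hs
            rw [hre]; linarith
          · intro k hk'
            have e : s + (μ : ℂ) + (k : ℂ) * μ = s + ((k + 1 : ℕ) : ℂ) * μ := by
              push_cast; ring
            rw [e]; exact hk (k + 1) (by omega)
        exact hj.comp_of_eq ((differentiable_id.add_const _).analyticAt s) rfl
      have hdiv := hsum.div (hP.analyticAt s) hP0
      exact hdiv.congr (Eventually.of_forall fun z => (hES m f z).symm)
  -- meromorphy everywhere on the extended half-plane
  have hmer : ∀ (m : ℕ) (f : {f : ℂ → ℂ // f ∈ 𝒜}) (s : ℂ), σ₀ - (m : ℝ) * μ < s.re →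
      MeromorphicAt (E m f) s := by
    intro m
    induction m with
    | zero =>
      intro f s hs
      have hs' : σ₀ < s.re := by simpa using hs
      have h1 : AnalyticAt ℂ f.1 s :=
        (hhol f.1 f.2).analyticAt ((hopen σ₀).mem_nhds hs')
      exact h1.meromorphicAt.congr (Eventually.of_forall fun z => (hE0 f z).symm)
    | succ m ih =>
      intro f s hs
      have hsum : MeromorphicAt
          (fun z => ∑ j, E m ⟨g f j, hmem f j⟩ (z + (μ : ℂ))) s := by
        apply meromorphicAt_finset_sum
        intro j _
        apply meromorphicAt_shift
        apply ih
        have hre : (s + (μ : ℂ)).re = s.re + μ := by simp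
        push_cast at hs
        rw [hre]; linarith
      have hdiv := hsum.div (hP.analyticAt s).meromorphicAt
      exact hdiv.congr (Eventually.of_forall fun z => (hES m f z).symm)
  -- the depth function
  set Nn : ℝ → ℕ := fun r => ⌈(σ₀ - r) / μ⌉₊ + 1 with hNn
  have hNlt : ∀ r : ℝ, σ₀ - (Nn r : ℝ) * μ < r := by
    intro r
    have h1 : (σ₀ - r) / μ < (Nn r : ℝ) := by
      have h2 := Nat.le_ceil ((σ₀ - r) / μ)
      have h3 : ((⌈(σ₀ - r) / μ⌉₊ : ℝ)) < (Nn r : ℝ) := by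
        simp only [hNn]; push_cast; linarith
      linarith
    have := (div_lt_iff₀ hμ).mp h1
    linarith
  have hNanti : ∀ r r' : ℝ, r ≤ r' → Nn r' ≤ Nn r := by
    intro r r' h
    simp only [hNn]
    have : (σ₀ - r') / μ ≤ (σ₀ - r) / μ := by gcongr
    exact Nat.add_le_add_right (Nat.ceil_le_ceil this) 1
  set fF : {f : ℂ → ℂ // f ∈ 𝒜} := ⟨F, hF⟩ with hfF
  refine ⟨fun s => E (Nn s.re) fF s, ?_, ?_, ?_⟩
  · -- meromorphic on ℂ
    intro x _
    set m₁ := Nn (x.re - 1) with hm₁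
    have hglue : ∀ᶠ z in 𝓝[≠] x, E (Nn z.re) fF z = E m₁ fF z := by
      have h1 : ∀ᶠ z in 𝓝 x, x.re - 1 < z.re :=
        (hopen (x.re - 1)).eventually_mem (by simp only [Set.mem_setOf_eq]; linarith)
      have h2 := hPgood x m₁
      filter_upwards [h1.filter_mono nhdsWithin_le_nhds, h2] with z hz1 hz2
      have hle : Nn z.re ≤ m₁ := hNanti _ _ hz1.le
      exact (hchain (Nn z.re) m₁ hle fF z (hNlt z.re) hz2).symm
    have hm : MeromorphicAt (E m₁ fF) x := by
      apply hmer
      have := hNlt (x.re - 1)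
      linarith
    exact hm.congr (EventuallyEq.symm hglue)
  · -- agreement with F on the right half-plane
    intro s hs hk
    have h0 : σ₀ - ((0 : ℕ) : ℝ) * μ < s.re := by simpa using hs
    have := hchain 0 (Nn s.re) (Nat.zero_le _) fF s h0 (fun k _ => hk k)
    simpa [hE0] using this
  · -- analyticity at good points
    intro s hk
    set m₁ := Nn (s.re - 1) with hm₁
    have hglue : ∀ᶠ z in 𝓝 s, E (Nn z.re) fF z = E m₁ fF z := by
      have h1 : ∀ᶠ z in 𝓝 s, s.re - 1 < z.re :=
        (hopen (s.re - 1)).eventually_mem (by simp only [Set.mem_setOf_eq]; linarith)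
      have h2 := hPgood s m₁
      rw [eventually_nhdsWithin_iff] at h2
      have h2' : ∀ᶠ z in 𝓝 s, ∀ k ≤ m₁, P (z + (k : ℂ) * μ) ≠ 0 := by
        filter_upwards [h2] with z hz
        by_cases hzs : z = s
        · subst hzs; exact fun k _ => hk k
        · exact hz (by simpa using hzs)
      filter_upwards [h1, h2'] with z hz1 hz2
      have hle : Nn z.re ≤ m₁ := hNanti _ _ hz1.le
      exact (hchain (Nn z.re) m₁ hle fF z (hNlt z.re) hz2).symm
    have hA : AnalyticAt ℂ (E m₁ fF) s := by
      apply han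
      · have := hNlt (s.re - 1); linarith
      · exact fun k _ => hk k
    exact hA.congr (EventuallyEq.symm hglue)
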